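/- Let H be a bialgebra over a field k, A a left H-module algebra, and F ∈ H ⊗ H an invertible element. Writing F⁻¹ = Σᵢ f̄ᵢ ⊗ ḡᵢ, equip A with the twisted product a ⋆ b := Σᵢ (f̄ᵢ•a)(ḡᵢ•b), and define Δ_F : H → H ⊗ H by Δ_F(h) := F · Δ(h) · F⁻¹. Then the twisted algebra (A, ⋆) is a module algebra with respect to Δ_F: for every h ∈ H and a, b ∈ A, writing Δ_F(h) = Σⱼ h'ⱼ ⊗ h''ⱼ, one has h•(a ⋆ b) = Σⱼ (h'ⱼ•a) ⋆ (h''ⱼ•b). -/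

import Mathlib

open TensorProduct

noncomputable section

variable {k H A : Type*} [Field k] [Ring H] [Bialgebra k H] [Ring A] [Algebra k A]

/-- The lift of an action `H → End A` to a map `H ⊗ H → End (A ⊗ A)`. -/
def act2 (act : H →ₐ[k] Module.End k A) :
    H ⊗[k] H →ₗ[k] (A ⊗[k] A →ₗ[k] A ⊗[k] A) :=
  TensorProduct.homTensorHomMap (RingHom.id k) A A A A ∘ₗ
    TensorProduct.map act.toLinearMap act.toLinearMap

/-- The twisted multiplication `A ⊗ A → A` determined by `Finv`:
`a ⊗ b ↦ a ⋆ b = Σᵢ (f̄ᵢ • a)(ḡᵢ • b)` for `Finv = Σᵢ f̄ᵢ ⊗ ḡᵢ`. -/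
def twistMulMap (act : H →ₐ[k] Module.End k A) (Finv : H ⊗[k] H) :
    A ⊗[k] A →ₗ[k] A :=
  LinearMap.mul' k A ∘ₗ act2 act Finv

/-- The twisted comultiplication `Δ_F(h) = F · Δ(h) · F⁻¹`. -/
def DeltaF (F Finv : H ⊗[k] H) : H →ₗ[k] H ⊗[k] H :=
  LinearMap.mulLeft k F ∘ₗ LinearMap.mulRight k Finv ∘ₗ Coalgebra.comul

lemma act2_mul (act : H →ₐ[k] Module.End k A) (x y : H ⊗[k] H) :
    act2 act (x * y) = act2 act x ∘ₗ act2 act y := by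
  induction x using TensorProduct.induction_on with
  | zero => simp
  | tmul x1 x2 =>
    induction y using TensorProduct.induction_on with
    | zero => simp
    | tmul y1 y2 =>
      ext a b
      simp [act2, Algebra.TensorProduct.tmul_mul_tmul, map_mul, Module.End.mul_apply]
    | add y1 y2 ih1 ih2 =>
      simp only [mul_add, map_add, ih1, ih2]
      ext a b
      simp
  | add x1 x2 ih1 ih2 =>
    simp only [add_mul, map_add, ih1, ih2]
    ext a b
    simp

lemma act_mul' (act : H →ₐ[k] Module.End k A)
    (hact_mul : ∀ (h : H) (a b : A),
      act h (a * b) = LinearMap.mul' k A (act2 act (Coalgebra.comul h) (a ⊗ₜ[k] b)))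
    (h : H) (u : A ⊗[k] A) :
    act h (LinearMap.mul' k A u) =
      LinearMap.mul' k A (act2 act (Coalgebra.comul h) u) := by
  induction u using TensorProduct.induction_on with
  | zero => simp
  | tmul a b => simpa using hact_mul h a b
  | add u v ihu ihv => simp [ihu, ihv]

/-- for an invertible `F`, the twisted algebra `(A, ⋆)` is a module algebra
with respect to the twisted comultiplication `Δ_F`:
`h • (a ⋆ b) = Σⱼ (h'ⱼ • a) ⋆ (h''ⱼ • b)` where `Δ_F(h) = Σⱼ h'ⱼ ⊗ h''ⱼ`. -/
theorem twisted_module_algebra (act : H →ₐ[k] Module.End k A)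
    (hact_mul : ∀ (h : H) (a b : A),
      act h (a * b) = LinearMap.mul' k A (act2 act (Coalgebra.comul h) (a ⊗ₜ[k] b)))
    (hact_one : ∀ h : H, act h (1 : A) = Coalgebra.counit (R := k) h • (1 : A))
    (F Finv : H ⊗[k] H) (hF : F * Finv = 1) (hF' : Finv * F = 1)
    (h : H) (a b : A) :
    act h (twistMulMap act Finv (a ⊗ₜ[k] b)) =
      twistMulMap act Finv (act2 act (DeltaF F Finv h) (a ⊗ₜ[k] b)) := by
  have key : DeltaF F Finv h = F * (Coalgebra.comul h * Finv) := rfl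
  have e1 : act2 act Finv (act2 act (F * (Coalgebra.comul h * Finv)) (a ⊗ₜ[k] b)) =
      act2 act (Coalgebra.comul h * Finv) (a ⊗ₜ[k] b) := by
    rw [← LinearMap.comp_apply, ← act2_mul, ← mul_assoc, ← mul_assoc, hF', one_mul]
  have e2 : act2 act (Coalgebra.comul h) (act2 act Finv (a ⊗ₜ[k] b)) =
      act2 act (Coalgebra.comul h * Finv) (a ⊗ₜ[k] b) := by
    rw [act2_mul]; rfl
  simp only [twistMulMap, LinearMap.comp_apply, key, e1]
  rw [act_mul' act hact_mul h, e2]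

end
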